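/- arXiv:1905.10120 — 3 statements merged into one kernel-verified Lean document; each statement's English description precedes it below -/
import Mathlib

section
/- With p_n = 1/(n² (ln n)²) and r(n) = 1/(n (ln n)²) for n ≥ 2, the series Σ_{n≥2} p_n · (1/r(n)) · Σ_{k=n+1}^∞ r(k) diverges to infinity. -/
open Real Finset

lemma tele_lower (k : ℕ) (hk : 2 ≤ k) :
    1 / Real.log k - 1 / Real.log ((k : ℝ) + 1) ≤ 1 / ((k : ℝ) * Real.log k ^ 2) := by
  have hk1 : (1 : ℝ) < (k : ℝ) := by exact_mod_cast Nat.lt_of_lt_of_le one_lt_two hk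
  have hk0 : (0 : ℝ) < (k : ℝ) := by linarith
  have ha : 0 < Real.log k := Real.log_pos hk1
  have hb : Real.log k ≤ Real.log ((k : ℝ) + 1) := Real.log_le_log (by positivity) (by linarith)
  have hb0 : 0 < Real.log ((k : ℝ) + 1) := lt_of_lt_of_le ha hb
  have hdiff : Real.log ((k : ℝ) + 1) - Real.log k ≤ 1 / k := by
    have h1 : Real.log (((k : ℝ) + 1) / k) ≤ ((k : ℝ) + 1) / k - 1 :=
      Real.log_le_sub_one_of_pos (by positivity)
    rw [Real.log_div (by positivity) (by positivity)] at h1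
    have : ((k : ℝ) + 1) / k - 1 = 1 / k := by field_simp; ring
    linarith [this ▸ h1]
  have key : 1 / Real.log k - 1 / Real.log ((k : ℝ) + 1)
      = (Real.log ((k : ℝ) + 1) - Real.log k) / (Real.log k * Real.log ((k : ℝ) + 1)) := by
    field_simp
  rw [key]
  have h2 : (Real.log ((k : ℝ) + 1) - Real.log k) / (Real.log k * Real.log ((k : ℝ) + 1))
      ≤ (1 / k) / (Real.log k * Real.log k) := by
    gcongr
  calc _ ≤ (1 / (k:ℝ)) / (Real.log k * Real.log k) := h2
    _ = 1 / ((k : ℝ) * Real.log k ^ 2) := by rw [sq]; field_simp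

lemma tele_upper (k : ℕ) (hk : 2 ≤ k) :
    1 / (((k : ℝ) + 1) * Real.log ((k : ℝ) + 1) ^ 2)
      ≤ 1 / Real.log k - 1 / Real.log ((k : ℝ) + 1) := by
  have hk1 : (1 : ℝ) < (k : ℝ) := by exact_mod_cast Nat.lt_of_lt_of_le one_lt_two hk
  have hk0 : (0 : ℝ) < (k : ℝ) := by linarith
  have ha : 0 < Real.log k := Real.log_pos hk1
  have hb : Real.log k ≤ Real.log ((k : ℝ) + 1) := Real.log_le_log (by positivity) (by linarith)
  have hb0 : 0 < Real.log ((k : ℝ) + 1) := lt_of_lt_of_le ha hb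
  have hdiff : 1 / ((k : ℝ) + 1) ≤ Real.log ((k : ℝ) + 1) - Real.log k := by
    have h1 : Real.log ((k : ℝ) / ((k : ℝ) + 1)) ≤ (k : ℝ) / ((k : ℝ) + 1) - 1 :=
      Real.log_le_sub_one_of_pos (by positivity)
    rw [Real.log_div (by positivity) (by positivity)] at h1
    have : (k : ℝ) / ((k : ℝ) + 1) - 1 = -(1 / ((k : ℝ) + 1)) := by field_simp; ring
    linarith [this ▸ h1]
  have key : 1 / Real.log k - 1 / Real.log ((k : ℝ) + 1)
      = (Real.log ((k : ℝ) + 1) - Real.log k) / (Real.log k * Real.log ((k : ℝ) + 1)) := by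
    field_simp
  rw [key]
  have h2 : (1 / ((k:ℝ) + 1)) / (Real.log ((k : ℝ) + 1) * Real.log ((k : ℝ) + 1))
      ≤ (Real.log ((k : ℝ) + 1) - Real.log k) / (Real.log k * Real.log ((k : ℝ) + 1)) := by
    gcongr <;> first | positivity | exact hdiff | exact hb | linarith
  calc 1 / (((k : ℝ) + 1) * Real.log ((k : ℝ) + 1) ^ 2)
      = (1 / ((k:ℝ) + 1)) / (Real.log ((k : ℝ) + 1) * Real.log ((k : ℝ) + 1)) := by
        rw [sq]; field_simp
    _ ≤ _ := h2

lemma r_summable : Summable (fun n : ℕ => 1 / ((n : ℝ) * Real.log n ^ 2)) := by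
  rw [← summable_nat_add_iff 3]
  apply summable_of_sum_range_le (c := 1 / Real.log 2)
  · intro n; positivity
  · intro m
    have hle : ∀ i ∈ Finset.range m,
        (1 : ℝ) / ((↑(i + 3) : ℝ) * Real.log (↑(i + 3) : ℝ) ^ 2)
          ≤ 1 / Real.log (↑(i + 2) : ℕ) - 1 / Real.log (↑(i + 1 + 2) : ℕ) := by
      intro i _
      have := tele_upper (i + 2) (by omega)
      have hc : ((i + 2 : ℕ) : ℝ) + 1 = ((i + 1 + 2 : ℕ) : ℝ) := by push_cast; ring
      rw [hc] at this
      exact this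
    calc ∑ i ∈ Finset.range m, (1 : ℝ) / ((↑(i + 3) : ℝ) * Real.log (↑(i + 3) : ℝ) ^ 2)
        ≤ ∑ i ∈ Finset.range m,
            (1 / Real.log (↑(i + 2) : ℕ) - 1 / Real.log (↑(i + 1 + 2) : ℕ)) :=
          Finset.sum_le_sum hle
      _ = 1 / Real.log (↑(0 + 2) : ℕ) - 1 / Real.log (↑(m + 2) : ℕ) :=
          Finset.sum_range_sub' (f := fun i : ℕ => 1 / Real.log (↑(i + 2) : ℕ)) m
      _ ≤ 1 / Real.log 2 := by
          simp only [Nat.zero_add, Nat.cast_ofNat]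
          have : 0 ≤ 1 / Real.log (↑(m + 2) : ℕ) := by positivity
          linarith

lemma tail_lower (n : ℕ) (hn : 2 ≤ n) :
    1 / (2 * Real.log ((n : ℝ) + 1))
      ≤ ∑' k : ℕ, (if n + 1 ≤ k then 1 / ((k : ℝ) * Real.log k ^ 2) else 0) := by
  have htail : Summable (fun k : ℕ => if n + 1 ≤ k then 1 / ((k : ℝ) * Real.log k ^ 2) else 0) := by
    refine Summable.of_nonneg_of_le (fun k => ?_) (fun k => ?_) r_summable
    · split <;> positivity
    · split
      · exact le_refl _
      · positivity
  set M := (n + 1) ^ 2 with hM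
  have hL : (1 : ℝ) < (n : ℝ) + 1 := by
    have : (2 : ℝ) ≤ (n : ℝ) := by exact_mod_cast hn
    linarith
  have hlogpos : 0 < Real.log ((n : ℝ) + 1) := Real.log_pos hL
  -- partial sum over Ico (n+1) (n+1+M)
  have hsum_le : ∑ k ∈ Finset.Ico (n + 1) (n + 1 + M),
      (if n + 1 ≤ k then 1 / ((k : ℝ) * Real.log k ^ 2) else 0)
      ≤ ∑' k : ℕ, (if n + 1 ≤ k then 1 / ((k : ℝ) * Real.log k ^ 2) else 0) :=
    Summable.sum_le_tsum _ (fun k _ => by split <;> positivity) htail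
  have heq : ∑ k ∈ Finset.Ico (n + 1) (n + 1 + M),
      (if n + 1 ≤ k then 1 / ((k : ℝ) * Real.log k ^ 2) else 0)
      = ∑ i ∈ Finset.range M, 1 / ((↑(n + 1 + i) : ℝ) * Real.log (↑(n + 1 + i) : ℕ) ^ 2) := by
    rw [Finset.sum_Ico_eq_sum_range]
    simp only [Nat.add_sub_cancel_left]
    refine Finset.sum_congr rfl fun i _ => ?_
    rw [if_pos (by omega)]
  have htele : ∑ i ∈ Finset.range M,
      (1 / Real.log (↑(n + 1 + i) : ℕ) - 1 / Real.log (↑(n + 1 + (i + 1)) : ℕ))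
      = 1 / Real.log (↑(n + 1 + 0) : ℕ) - 1 / Real.log (↑(n + 1 + M) : ℕ) :=
    Finset.sum_range_sub' (f := fun i : ℕ => 1 / Real.log (↑(n + 1 + i) : ℕ)) M
  have hterm : ∀ i ∈ Finset.range M,
      1 / Real.log (↑(n + 1 + i) : ℕ) - 1 / Real.log (↑(n + 1 + (i + 1)) : ℕ)
        ≤ 1 / ((↑(n + 1 + i) : ℝ) * Real.log (↑(n + 1 + i) : ℕ) ^ 2) := by
    intro i _
    have := tele_lower (n + 1 + i) (by omega)
    have hc : ((n + 1 + i : ℕ) : ℝ) + 1 = ((n + 1 + (i + 1) : ℕ) : ℝ) := by push_cast; ring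
    rw [hc] at this
    exact this
  have hlogM : 2 * Real.log ((n : ℝ) + 1) ≤ Real.log (↑(n + 1 + M) : ℕ) := by
    have h1 : ((n + 1 : ℕ) : ℝ) ^ 2 ≤ ((n + 1 + M : ℕ) : ℝ) := by
      have : (n + 1) ^ 2 ≤ n + 1 + M := by omega
      exact_mod_cast this
    calc 2 * Real.log ((n : ℝ) + 1) = Real.log (((n + 1 : ℕ) : ℝ) ^ 2) := by
          rw [Real.log_pow]; push_cast; ring
      _ ≤ _ := Real.log_le_log (by positivity) h1
  have hfinal : 1 / (2 * Real.log ((n : ℝ) + 1))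
      ≤ 1 / Real.log (↑(n + 1 + 0) : ℕ) - 1 / Real.log (↑(n + 1 + M) : ℕ) := by
    have hc0 : ((n + 1 + 0 : ℕ) : ℝ) = (n : ℝ) + 1 := by push_cast; ring
    rw [hc0]
    have hMpos : 0 < Real.log (↑(n + 1 + M) : ℕ) := lt_of_lt_of_le (by linarith) hlogM
    have : 1 / Real.log (↑(n + 1 + M) : ℕ) ≤ 1 / (2 * Real.log ((n : ℝ) + 1)) :=
      one_div_le_one_div_of_le (by linarith) hlogM
    have h2 : 1 / ((n : ℝ) + 1) * 0 = 0 := by ring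
    have hhalf : 1 / (2 * Real.log ((n : ℝ) + 1)) * 2 = 1 / Real.log ((n : ℝ) + 1) := by
      field_simp
    linarith
  calc 1 / (2 * Real.log ((n : ℝ) + 1))
      ≤ 1 / Real.log (↑(n + 1 + 0) : ℕ) - 1 / Real.log (↑(n + 1 + M) : ℕ) := hfinal
    _ = ∑ i ∈ Finset.range M,
        (1 / Real.log (↑(n + 1 + i) : ℕ) - 1 / Real.log (↑(n + 1 + (i + 1)) : ℕ)) := htele.symm
    _ ≤ ∑ i ∈ Finset.range M, 1 / ((↑(n + 1 + i) : ℝ) * Real.log (↑(n + 1 + i) : ℕ) ^ 2) :=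
        Finset.sum_le_sum hterm
    _ = _ := heq.symm
    _ ≤ _ := hsum_le

lemma g_not_summable : ¬ Summable (fun n : ℕ => 1 / ((n : ℝ) * Real.log ((n : ℝ) + 1))) := by
  intro hg
  have hg0 : ∀ n : ℕ, 0 ≤ 1 / ((n : ℝ) * Real.log ((n : ℝ) + 1)) := by
    intro n
    have : 0 ≤ Real.log ((n : ℝ) + 1) := Real.log_nonneg (by linarith [Nat.cast_nonneg (α := ℝ) n])
    positivity
  have hgmono : ∀ ⦃m n : ℕ⦄, 0 < m → m ≤ n →
      1 / ((n : ℝ) * Real.log ((n : ℝ) + 1)) ≤ 1 / ((m : ℝ) * Real.log ((m : ℝ) + 1)) := by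
    intro m n hm hmn
    have hm1 : (1 : ℝ) ≤ (m : ℝ) := by exact_mod_cast hm
    have hmn' : (m : ℝ) ≤ (n : ℝ) := by exact_mod_cast hmn
    have hlm : 0 < Real.log ((m : ℝ) + 1) := Real.log_pos (by linarith)
    apply one_div_le_one_div_of_le (by positivity)
    have : Real.log ((m : ℝ) + 1) ≤ Real.log ((n : ℝ) + 1) :=
      Real.log_le_log (by positivity) (by linarith)
    exact mul_le_mul hmn' this (le_of_lt hlm) (by linarith)
  have hcond := (summable_condensed_iff_of_nonneg hg0 hgmono).2 hg
  have hlog2 : 0 < Real.log 2 := Real.log_pos one_lt_two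
  have hcomp : Summable (fun k : ℕ => 1 / (((k : ℝ) + 1) * Real.log 2)) := by
    refine Summable.of_nonneg_of_le (fun k => by positivity) (fun k => ?_) hcond
    have hpow : ((2 ^ k : ℕ) : ℝ) = (2 : ℝ) ^ k := by push_cast; ring
    have h2k : (1 : ℝ) ≤ (2 : ℝ) ^ k := one_le_pow₀ one_le_two
    have hlogpos : 0 < Real.log ((2 : ℝ) ^ k + 1) := Real.log_pos (by linarith)
    have heq : (2 : ℝ) ^ k * (1 / (((2 ^ k : ℕ) : ℝ) * Real.log (((2 ^ k : ℕ) : ℝ) + 1)))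
        = 1 / Real.log ((2 : ℝ) ^ k + 1) := by
      rw [hpow]; field_simp
    rw [heq]
    apply one_div_le_one_div_of_le hlogpos
    calc Real.log ((2 : ℝ) ^ k + 1) ≤ Real.log ((2 : ℝ) ^ (k + 1)) := by
          apply Real.log_le_log (by positivity)
          rw [pow_succ]; linarith
      _ = ((k : ℝ) + 1) * Real.log 2 := by rw [Real.log_pow]; push_cast; ring
  have hharm : Summable (fun k : ℕ => 1 / ((k : ℝ) + 1)) := by
    have := hcomp.mul_right (Real.log 2)
    refine this.congr fun k => ?_
    field_simp
  have : Summable (fun k : ℕ => 1 / ((k + 1 : ℕ) : ℝ)) := by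
    refine hharm.congr fun k => by push_cast; ring
  exact not_summable_one_div_natCast ((summable_nat_add_iff 1).1 this)

/-- With `p_n = 1/(n² (ln n)²)` and `r(n) = 1/(n (ln n)²)`, the series
`∑_{n ≥ 2} p_n · (1/r(n)) · ∑_{k=n+1}^∞ r(k)` diverges to infinity (equivalently, this
series of nonnegative terms is not summable). -/
theorem jumps_series_diverges
    (p r : ℕ → ℝ)
    (hp : ∀ n, p n = 1 / ((n : ℝ) ^ 2 * Real.log n ^ 2))
    (hr : ∀ n, r n = 1 / ((n : ℝ) * Real.log n ^ 2)) :
    ¬ Summable (fun n : ℕ => if 2 ≤ n then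
        p n * (1 / r n) * (∑' k : ℕ, if n + 1 ≤ k then r k else 0) else 0) := by
  intro H
  set f : ℕ → ℝ := fun n : ℕ => if 2 ≤ n then
      p n * (1 / r n) * (∑' k : ℕ, if n + 1 ≤ k then r k else 0) else 0 with hf
  -- lower bound on the terms
  have hlower : ∀ n : ℕ, (if 2 ≤ n then 1 / ((n : ℝ) * Real.log ((n : ℝ) + 1)) else 0)
      ≤ 2 * f n := by
    intro n
    by_cases hn : 2 ≤ n
    · rw [if_pos hn, hf]
      simp only [if_pos hn]
      have hn2 : (2 : ℝ) ≤ (n : ℝ) := by exact_mod_cast hn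
      have hn0 : (0 : ℝ) < (n : ℝ) := by linarith
      have hln : 0 < Real.log n := Real.log_pos (by linarith)
      have hln1 : 0 < Real.log ((n : ℝ) + 1) := Real.log_pos (by linarith)
      have hcoef : p n * (1 / r n) = 1 / (n : ℝ) := by
        rw [hp, hr, one_div_one_div]
        field_simp
      rw [hcoef]
      have htail : 1 / (2 * Real.log ((n : ℝ) + 1))
          ≤ ∑' k : ℕ, (if n + 1 ≤ k then r k else 0) := by
        have := tail_lower n hn
        simpa only [← hr] using this
      calc 1 / ((n : ℝ) * Real.log ((n : ℝ) + 1))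
          = 2 * (1 / (n : ℝ) * (1 / (2 * Real.log ((n : ℝ) + 1)))) := by
            field_simp
        _ ≤ 2 * (1 / (n : ℝ) * ∑' k : ℕ, (if n + 1 ≤ k then r k else 0)) := by
            have h1n : (0 : ℝ) < 1 / (n : ℝ) := by positivity
            have := mul_le_mul_of_nonneg_left htail (le_of_lt h1n)
            linarith
    · rw [if_neg hn, hf]
      simp only [if_neg hn]
      norm_num
  -- hence the truncated harmonic-log series is summable
  have hG : Summable (fun n : ℕ => if 2 ≤ n then
      1 / ((n : ℝ) * Real.log ((n : ℝ) + 1)) else 0) := by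
    refine Summable.of_nonneg_of_le (fun n => ?_) hlower (H.mul_left 2)
    split
    · have : 0 ≤ Real.log ((n : ℝ) + 1) := Real.log_nonneg (by linarith [Nat.cast_nonneg (α := ℝ) n])
      positivity
    · exact le_refl _
  -- add back the finitely many missing terms
  have hsmall : Summable (fun n : ℕ => if 2 ≤ n then 0
      else 1 / ((n : ℝ) * Real.log ((n : ℝ) + 1))) := by
    apply summable_of_ne_finset_zero (s := Finset.range 2)
    intro n hn
    have : 2 ≤ n := by simp at hn; omega
    rw [if_pos this]
  have hg : Summable (fun n : ℕ => 1 / ((n : ℝ) * Real.log ((n : ℝ) + 1))) := by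
    refine (hG.add hsmall).congr fun n => ?_
    by_cases hn : 2 ≤ n <;> simp [hn]
  exact g_not_summable hg
end

section
/- Let P₁ and P₂ be doubly stochastic Markov kernels on a countable set X with P₂ symmetric, and suppose there exists ε > 0 such that P₁(x,y) ≥ ε·P₂(x,y) for all x,y ∈ X. If P₂ is transient (its Green function G₂(x,x) is finite for all x), then P₁ is transient. -/
open scoped ENNReal

set_option maxHeartbeats 1000000

noncomputable def kpow {X : Type*} [DecidableEq X] (p : X → X → ℝ≥0∞) : ℕ → X → X → ℝ≥0∞
  | 0 => fun x y => if x = y then 1 else 0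
  | n + 1 => fun x y => ∑' z, kpow p n x z * p z y

noncomputable def green {X : Type*} [DecidableEq X] (p : X → X → ℝ≥0∞) (x y : X) : ℝ≥0∞ :=
  ∑' n, kpow p n x y

namespace BLP

variable {X : Type*} [DecidableEq X]

lemma kpow_rowsum (p : X → X → ℝ≥0∞) (hrow : ∀ x, ∑' y, p x y = 1) :
    ∀ n x, ∑' y, kpow p n x y = 1 := by
  intro n
  induction n with
  | zero =>
      intro x
      rw [show (fun y => kpow p 0 x y) = fun y => if x = y then 1 else 0 from rfl]
      rw [tsum_eq_single x (fun y hy => by simp [Ne.symm hy])]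
      simp
  | succ n ih =>
      intro x
      show ∑' y, ∑' w, kpow p n x w * p w y = 1
      rw [ENNReal.tsum_comm]
      calc ∑' w, ∑' y, kpow p n x w * p w y
          = ∑' w, kpow p n x w * ∑' y, p w y := by
            refine tsum_congr fun w => ?_; rw [ENNReal.tsum_mul_left]
        _ = ∑' w, kpow p n x w := by
            refine tsum_congr fun w => by rw [hrow w, mul_one]
        _ = 1 := ih x

lemma kpow_le_one (p : X → X → ℝ≥0∞) (hrow : ∀ x, ∑' y, p x y = 1) (n : ℕ) (x y : X) :
    kpow p n x y ≤ 1 := by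
  calc kpow p n x y ≤ ∑' y', kpow p n x y' := ENNReal.le_tsum y
    _ = 1 := kpow_rowsum p hrow n x

/-- The `z`-resolvent row vector started at `x₀`. -/
noncomputable def Uv (p : X → X → ℝ≥0∞) (z : ℝ≥0∞) (x₀ y : X) : ℝ≥0∞ :=
  ∑' n, z ^ n * kpow p n x₀ y

lemma Uv_eq (p : X → X → ℝ≥0∞) (z : ℝ≥0∞) (x₀ y : X) :
    Uv p z x₀ y = (if x₀ = y then 1 else 0) + z * ∑' w, Uv p z x₀ w * p w y := by
  unfold Uv
  rw [tsum_eq_zero_add' ENNReal.summable]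
  congr 1
  · simp [kpow]
  · calc ∑' n, z ^ (n+1) * kpow p (n+1) x₀ y
        = ∑' n, ∑' w, z * ((z ^ n * kpow p n x₀ w) * p w y) := by
          refine tsum_congr fun n => ?_
          rw [show kpow p (n+1) x₀ y = ∑' w, kpow p n x₀ w * p w y from rfl,
            ← ENNReal.tsum_mul_left]
          exact tsum_congr fun w => by ring
      _ = ∑' w, ∑' n, z * ((z ^ n * kpow p n x₀ w) * p w y) := ENNReal.tsum_comm
      _ = ∑' w, z * ((∑' n, z ^ n * kpow p n x₀ w) * p w y) := by
          refine tsum_congr fun w => ?_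
          rw [ENNReal.tsum_mul_left, ENNReal.tsum_mul_right]
      _ = z * ∑' w, (∑' n, z ^ n * kpow p n x₀ w) * p w y := ENNReal.tsum_mul_left

lemma Uv_sum (p : X → X → ℝ≥0∞) (hrow : ∀ x, ∑' y, p x y = 1) (z : ℝ≥0∞) (x₀ : X) :
    ∑' y, Uv p z x₀ y = (1 - z)⁻¹ := by
  unfold Uv
  rw [ENNReal.tsum_comm]
  calc ∑' n, ∑' y, z ^ n * kpow p n x₀ y
      = ∑' n, z ^ n * ∑' y, kpow p n x₀ y :=
        tsum_congr fun n => ENNReal.tsum_mul_left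
    _ = ∑' n : ℕ, z ^ n :=
        tsum_congr fun n => by rw [kpow_rowsum p hrow n x₀, mul_one]
    _ = (1 - z)⁻¹ := ENNReal.tsum_geometric z

lemma Uv_le (p : X → X → ℝ≥0∞) (hrow : ∀ x, ∑' y, p x y = 1) (z : ℝ≥0∞) (x₀ y : X) :
    Uv p z x₀ y ≤ (1 - z)⁻¹ := by
  calc Uv p z x₀ y ≤ ∑' y', Uv p z x₀ y' := ENNReal.le_tsum y
    _ = (1 - z)⁻¹ := Uv_sum p hrow z x₀

/-- Double-sum quadratic pairing. -/
noncomputable def QQ (k : X → X → ℝ≥0∞) (f g : X → ℝ≥0∞) : ℝ≥0∞ :=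
  ∑' q : X × X, f q.1 * k q.1 q.2 * g q.2

lemma QQ_eq_iter (k : X → X → ℝ≥0∞) (f g : X → ℝ≥0∞) :
    QQ k f g = ∑' w, ∑' y, f w * k w y * g y := ENNReal.tsum_prod'

lemma pair_eq (p : X → X → ℝ≥0∞) (z : ℝ≥0∞) (x₀ : X) (g : X → ℝ≥0∞) :
    ∑' y, Uv p z x₀ y * g y = g x₀ + z * QQ p (Uv p z x₀) g := by
  calc ∑' y, Uv p z x₀ y * g y
      = ∑' y, ((if x₀ = y then 1 else 0) * g y + z * ∑' w, Uv p z x₀ w * p w y * g y) := by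
        refine tsum_congr fun y => ?_
        rw [Uv_eq p z x₀ y, add_mul, mul_assoc]
        congr 1
        rw [ENNReal.tsum_mul_right]
    _ = (∑' y, (if x₀ = y then 1 else 0) * g y) + ∑' y, z * ∑' w, Uv p z x₀ w * p w y * g y :=
        ENNReal.tsum_add
    _ = g x₀ + z * QQ p (Uv p z x₀) g := by
        congr 1
        · rw [tsum_eq_single x₀ (fun y hy => by simp [Ne.symm hy])]; simp
        · rw [ENNReal.tsum_mul_left]
          congr 1
          rw [QQ, ENNReal.tsum_prod', ENNReal.tsum_comm]

lemma QQ_le (k : X → X → ℝ≥0∞) (hrow : ∀ x, ∑' y, k x y = 1) (f g : X → ℝ≥0∞)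
    (M : ℝ≥0∞) (hg : ∀ y, g y ≤ M) : QQ k f g ≤ M * ∑' w, f w := by
  rw [QQ_eq_iter]
  calc ∑' w, ∑' y, f w * k w y * g y
      ≤ ∑' w, ∑' y, (f w * M) * k w y := by
        refine ENNReal.tsum_le_tsum fun w => ENNReal.tsum_le_tsum fun y => ?_
        calc f w * k w y * g y ≤ f w * k w y * M := mul_le_mul_right (hg y) _
          _ = (f w * M) * k w y := by ring
    _ = ∑' w, f w * M := by
        refine tsum_congr fun w => ?_
        rw [ENNReal.tsum_mul_left, hrow w, mul_one]
    _ = M * ∑' w, f w := by rw [← ENNReal.tsum_mul_left]; exact tsum_congr fun w => mul_comm _ _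

lemma QQ_symm (k : X → X → ℝ≥0∞) (hs : ∀ x y, k x y = k y x) (f g : X → ℝ≥0∞) :
    QQ k f g = QQ k g f := by
  unfold QQ
  rw [← (Equiv.prodComm X X).tsum_eq]
  exact tsum_congr fun q => by simp [Equiv.prodComm, hs q.2 q.1]; ring

lemma fub_row {X : Type*} (d : X → X → ℝ) (hd0 : ∀ w y, 0 ≤ d w y)
    (hdsum : ∀ w, Summable (d w)) (c : ℝ) (hrow : ∀ w, ∑' y, d w y = c)
    (h : X → ℝ) (hh0 : ∀ w, 0 ≤ h w) (hh : Summable h) :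
    Summable (fun q : X × X => d q.1 q.2 * h q.1) ∧
      ∑' q : X × X, d q.1 q.2 * h q.1 = c * ∑' w, h w := by
  have key : ∀ w, ∑' y, d w y * h w = c * h w := by
    intro w; rw [tsum_mul_right, hrow w]
  have hs : Summable (fun q : X × X => d q.1 q.2 * h q.1) := by
    rw [summable_prod_of_nonneg (fun q => mul_nonneg (hd0 _ _) (hh0 _))]
    refine ⟨fun w => (hdsum w).mul_right (h w), ?_⟩
    exact (hh.mul_left c).congr fun w => (key w).symm
  refine ⟨hs, ?_⟩
  rw [Summable.tsum_prod' hs (fun w => (hdsum w).mul_right (h w))]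
  calc ∑' w, ∑' y, d w y * h w = ∑' w, c * h w := tsum_congr key
    _ = c * ∑' w, h w := tsum_mul_left

lemma fub_col {X : Type*} (d : X → X → ℝ) (hd0 : ∀ w y, 0 ≤ d w y)
    (hdsum : ∀ y, Summable (fun w => d w y)) (c : ℝ) (hcol : ∀ y, ∑' w, d w y = c)
    (h : X → ℝ) (hh0 : ∀ w, 0 ≤ h w) (hh : Summable h) :
    Summable (fun q : X × X => d q.1 q.2 * h q.2) ∧
      ∑' q : X × X, d q.1 q.2 * h q.2 = c * ∑' w, h w := by
  obtain ⟨hs, heq⟩ := fub_row (fun w y => d y w) (fun w y => hd0 y w) hdsum c hcol h hh0 hh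
  have hcomp : (fun q : X × X => d q.1 q.2 * h q.2) =
      (fun q : X × X => d q.2 q.1 * h q.1) ∘ (Equiv.prodComm X X) := by
    funext q; rfl
  constructor
  · rw [hcomp]; exact ((Equiv.prodComm X X).summable_iff).mpr hs
  · calc ∑' q : X × X, d q.1 q.2 * h q.2
        = ∑' q : X × X, (fun r : X × X => d r.2 r.1 * h r.1) ((Equiv.prodComm X X) q) :=
          tsum_congr fun q => rfl
      _ = ∑' q : X × X, d q.2 q.1 * h q.1 :=
          (Equiv.prodComm X X).tsum_eq (fun r : X × X => d r.2 r.1 * h r.1)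
      _ = c * ∑' w, h w := heq

set_option maxHeartbeats 1000000

lemma amgm_pt (dd a b : ℝ) (hd : 0 ≤ dd) : a * dd * b ≤ 1/2 * (dd * (a*a) + dd * (b*b)) := by
  nlinarith [mul_nonneg hd (mul_self_nonneg (a - b))]

lemma qform_bound {X : Type*} (d : X → X → ℝ) (h : X → ℝ) (c : ℝ)
    (hd0 : ∀ w y, 0 ≤ d w y)
    (hdsum : ∀ w, Summable (d w)) (hdrow : ∀ w, ∑' y, d w y = c)
    (hdcsum : ∀ y, Summable fun w => d w y) (hdcol : ∀ y, ∑' w, d w y = c)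
    (shh : Summable (fun y => h y * h y))
    (sF : Summable (fun q : X × X => h q.1 * d q.1 q.2 * h q.2)) :
    ∑' q : X × X, h q.1 * d q.1 q.2 * h q.2 ≤ c * ∑' y, h y * h y := by
  obtain ⟨sdom1, hdom1⟩ := fub_row d hd0 hdsum c hdrow (fun y => h y * h y)
    (fun y => mul_self_nonneg _) shh
  obtain ⟨sdom2, hdom2⟩ := fub_col d hd0 hdcsum c hdcol (fun y => h y * h y)
    (fun y => mul_self_nonneg _) shh
  calc ∑' q : X × X, h q.1 * d q.1 q.2 * h q.2
      ≤ ∑' q : X × X, 1/2 * (d q.1 q.2 * (h q.1 * h q.1) + d q.1 q.2 * (h q.2 * h q.2)) :=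
        Summable.tsum_le_tsum (fun q => amgm_pt _ _ _ (hd0 q.1 q.2)) sF ((sdom1.add sdom2).mul_left (1/2))
    _ = 1/2 * (c * ∑' y, h y * h y + c * ∑' y, h y * h y) := by
        rw [tsum_mul_left, Summable.tsum_add sdom1 sdom2, hdom1, hdom2]
    _ = c * ∑' y, h y * h y := by ring

lemma real_core {X : Type*} (p s : X → X → ℝ) (u v : X → ℝ)
    (zr εr ar br A1r A2r Tr Puur Suur Svvr Suvr : ℝ)
    (hs0 : ∀ w y, 0 ≤ s w y) (hssym : ∀ w y, s w y = s y w)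
    (hu0 : ∀ y, 0 ≤ u y)
    (sprow : ∀ w, Summable (fun y => p w y)) (hprow : ∀ w, ∑' y, p w y = 1)
    (spcol : ∀ y, Summable (fun w => p w y)) (hpcol : ∀ y, ∑' w, p w y = 1)
    (ssrow : ∀ w, Summable (fun y => s w y)) (hsrow : ∀ w, ∑' y, s w y = 1)
    (sscol : ∀ y, Summable (fun w => s w y)) (hscol : ∀ y, ∑' w, s w y = 1)
    (hcompr : ∀ w y, εr * s w y ≤ p w y)
    (hzr0 : 0 ≤ zr) (hzr1 : zr ≤ 1) (hεr0 : 0 < εr) (hεr1 : εr ≤ 1)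
    (ha1 : 1 ≤ ar) (hb1 : 1 ≤ br)
    (hA1 : A1r = ∑' y, u y * u y) (sA1 : Summable (fun y => u y * u y))
    (hA2 : A2r = ∑' y, v y * v y) (sA2 : Summable (fun y => v y * v y))
    (hT : Tr = ∑' y, u y * v y) (sT : Summable (fun y => u y * v y))
    (hPuu : Puur = ∑' q : X × X, u q.1 * p q.1 q.2 * u q.2)
    (sPuu : Summable (fun q : X × X => u q.1 * p q.1 q.2 * u q.2))
    (hSuu : Suur = ∑' q : X × X, u q.1 * s q.1 q.2 * u q.2)
    (sSuu : Summable (fun q : X × X => u q.1 * s q.1 q.2 * u q.2))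
    (hSvv : Svvr = ∑' q : X × X, v q.1 * s q.1 q.2 * v q.2)
    (sSvv : Summable (fun q : X × X => v q.1 * s q.1 q.2 * v q.2))
    (hSuv : Suvr = ∑' q : X × X, v q.1 * s q.1 q.2 * u q.2)
    (sSuv : Summable (fun q : X × X => v q.1 * s q.1 q.2 * u q.2))
    (r1 : A1r = ar + zr * Puur) (r2 : A2r = br + zr * Svvr) (r3 : Tr = ar + zr * Suvr) :
    εr * ar ≤ br := by
  have hapos : (0:ℝ) < ar := lt_of_lt_of_le one_pos ha1
  have hbpos : (0:ℝ) < br := lt_of_lt_of_le one_pos hb1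
  -- ## Step 1: the form inequality  εr * (A1r - zr * Suur) ≤ ar
  have hstar : εr * (A1r - zr * Suur) ≤ ar := by
    obtain ⟨d, hd⟩ : ∃ d : X → X → ℝ, ∀ w y, d w y = p w y - εr * s w y :=
      ⟨_, fun w y => rfl⟩
    have hd0 : ∀ w y, 0 ≤ d w y := fun w y => by
      rw [hd]; exact sub_nonneg.mpr (hcompr w y)
    have hdsum : ∀ w, Summable (d w) := fun w =>
      (((sprow w).sub ((ssrow w).mul_left εr)).congr fun y => (hd w y).symm)
    have hdrow : ∀ w, ∑' y, d w y = 1 - εr := by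
      intro w
      rw [tsum_congr (hd w), Summable.tsum_sub (sprow w) ((ssrow w).mul_left εr), tsum_mul_left,
        hprow w, hsrow w, mul_one]
    have hdcsum : ∀ y, Summable (fun w => d w y) := fun y =>
      (((spcol y).sub ((sscol y).mul_left εr)).congr fun w => (hd w y).symm)
    have hdcol : ∀ y, ∑' w, d w y = 1 - εr := by
      intro y
      rw [tsum_congr (fun w => hd w y), Summable.tsum_sub (spcol y) ((sscol y).mul_left εr),
        tsum_mul_left, hpcol y, hscol y, mul_one]
    have hQpt : ∀ q : X × X, u q.1 * d q.1 q.2 * u q.2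
        = u q.1 * p q.1 q.2 * u q.2 - εr * (u q.1 * s q.1 q.2 * u q.2) := fun q => by
      rw [hd]; ring
    have sQd : Summable (fun q : X × X => u q.1 * d q.1 q.2 * u q.2) :=
      (sPuu.sub (sSuu.mul_left εr)).congr fun q => (hQpt q).symm
    have hQdrepr : ∑' q : X × X, u q.1 * d q.1 q.2 * u q.2 = Puur - εr * Suur := by
      rw [tsum_congr hQpt, Summable.tsum_sub sPuu (sSuu.mul_left εr), tsum_mul_left, hPuu, hSuu]
    have hQd0 : 0 ≤ Puur - εr * Suur := by
      rw [← hQdrepr]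
      exact tsum_nonneg fun q => mul_nonneg (mul_nonneg (hu0 _) (hd0 _ _)) (hu0 _)
    have hQd_le : Puur - εr * Suur ≤ (1 - εr) * A1r := by
      rw [← hQdrepr, hA1]
      exact qform_bound d u (1 - εr) hd0 hdsum hdrow hdcsum hdcol sA1 sQd
    have hzD : zr * (Puur - εr * Suur) ≤ Puur - εr * Suur :=
      mul_le_of_le_one_left hQd0 hzr1
    nlinarith [hzD, hQd_le]
  -- ## Step 2: Cauchy–Schwarz for the form I - zr * s
  obtain ⟨t, ht⟩ : ∃ t : ℝ, t = ar / br := ⟨_, rfl⟩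
  have ht0 : 0 ≤ t := ht ▸ div_nonneg hapos.le hbpos.le
  obtain ⟨g, hg⟩ : ∃ g : X → ℝ, ∀ y, g y = u y - t * v y := ⟨_, fun y => rfl⟩
  have hg2 : ∀ y, g y * g y = u y * u y + (t*t) * (v y * v y) - (2*t) * (u y * v y) :=
    fun y => by rw [hg]; ring
  have sgg : Summable (fun y => g y * g y) :=
    ((sA1.add (sA2.mul_left (t*t))).sub (sT.mul_left (2*t))).congr fun y => (hg2 y).symm
  have claim1 : ∑' y, g y * g y = A1r + (t*t) * A2r - (2*t) * Tr := by
    rw [tsum_congr hg2, Summable.tsum_sub (sA1.add (sA2.mul_left (t*t))) (sT.mul_left (2*t)),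
      Summable.tsum_add sA1 (sA2.mul_left (t*t)), tsum_mul_left, tsum_mul_left, hA1, hA2, hT]
  -- flipped cross term
  have sflip : Summable (fun q : X × X => u q.1 * s q.1 q.2 * v q.2) := by
    have h := ((Equiv.prodComm X X).summable_iff).mpr sSuv
    refine h.congr fun q => ?_
    show v q.2 * s q.2 q.1 * u q.1 = _
    rw [hssym q.2 q.1]; ring
  have hflip : ∑' q : X × X, u q.1 * s q.1 q.2 * v q.2 = Suvr := by
    rw [hSuv]
    calc ∑' q : X × X, u q.1 * s q.1 q.2 * v q.2
        = ∑' q : X × X, (fun r : X × X => v r.1 * s r.1 r.2 * u r.2) ((Equiv.prodComm X X) q) := by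
          refine tsum_congr fun q => ?_
          show _ = v q.2 * s q.2 q.1 * u q.1
          rw [hssym q.2 q.1]; ring
      _ = ∑' r : X × X, v r.1 * s r.1 r.2 * u r.2 :=
          (Equiv.prodComm X X).tsum_eq (fun r : X × X => v r.1 * s r.1 r.2 * u r.2)
  have hFpt : ∀ q : X × X, g q.1 * s q.1 q.2 * g q.2
      = u q.1 * s q.1 q.2 * u q.2 + (t*t) * (v q.1 * s q.1 q.2 * v q.2)
        - t * (u q.1 * s q.1 q.2 * v q.2) - t * (v q.1 * s q.1 q.2 * u q.2) := fun q => by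
    rw [hg, hg]; ring
  have sF : Summable (fun q : X × X => g q.1 * s q.1 q.2 * g q.2) :=
    (((sSuu.add (sSvv.mul_left (t*t))).sub (sflip.mul_left t)).sub (sSuv.mul_left t)).congr
      fun q => (hFpt q).symm
  have claim2 : ∑' q : X × X, g q.1 * s q.1 q.2 * g q.2
      = Suur + (t*t) * Svvr - (2*t) * Suvr := by
    rw [tsum_congr hFpt,
      Summable.tsum_sub ((sSuu.add (sSvv.mul_left (t*t))).sub (sflip.mul_left t)) (sSuv.mul_left t),
      Summable.tsum_sub (sSuu.add (sSvv.mul_left (t*t))) (sflip.mul_left t),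
      Summable.tsum_add sSuu (sSvv.mul_left (t*t)), tsum_mul_left, tsum_mul_left, tsum_mul_left,
      hflip, hSuu, hSvv, hSuv]
    ring
  have hsumF_le : ∑' q : X × X, g q.1 * s q.1 q.2 * g q.2 ≤ ∑' y, g y * g y := by
    have := qform_bound s g 1 hs0 ssrow hsrow sscol hscol sgg sF
    rwa [one_mul] at this
  have claim3 : zr * (∑' q : X × X, g q.1 * s q.1 q.2 * g q.2) ≤ ∑' y, g y * g y := by
    rcases le_or_gt (∑' q : X × X, g q.1 * s q.1 q.2 * g q.2) 0 with h | h
    · exact le_trans (mul_nonpos_of_nonneg_of_nonpos hzr0 h)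
        (tsum_nonneg fun y => mul_self_nonneg _)
    · calc zr * (∑' q : X × X, g q.1 * s q.1 q.2 * g q.2)
          ≤ 1 * (∑' q : X × X, g q.1 * s q.1 q.2 * g q.2) :=
            mul_le_mul_of_nonneg_right hzr1 h.le
        _ = ∑' q : X × X, g q.1 * s q.1 q.2 * g q.2 := one_mul _
        _ ≤ ∑' y, g y * g y := hsumF_le
  -- ## Step 3: conclude
  rw [claim1, claim2] at claim3
  have hdiv : t * br = ar := by rw [ht]; exact div_mul_cancel₀ _ hbpos.ne'
  have spade : 0 ≤ (A1r - zr * Suur) + (t*t) * br - (2*t) * ar := by nlinarith [claim3]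
  have h1 : (t*t) * br = t * ar := by rw [mul_assoc, hdiv]
  have hc : t * ar ≤ A1r - zr * Suur := by nlinarith [spade, h1]
  have h2 : εr * (t * ar) ≤ ar :=
    le_trans (mul_le_mul_of_nonneg_left hc hεr0.le) hstar
  have h3 : εr * t ≤ 1 := by nlinarith [h2, hapos]
  calc εr * ar = εr * (t * br) := by rw [hdiv]
    _ = (εr * t) * br := by ring
    _ ≤ 1 * br := mul_le_mul_of_nonneg_right h3 hbpos.le
    _ = br := one_mul _

/-- The key per-`z` comparison. -/
lemma key {X : Type*} [Countable X] [DecidableEq X]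
    (P₁ P₂ : X → X → ℝ≥0∞)
    (h₁row : ∀ x, ∑' y, P₁ x y = 1) (h₁col : ∀ y, ∑' x, P₁ x y = 1)
    (h₂row : ∀ x, ∑' y, P₂ x y = 1) (h₂col : ∀ y, ∑' x, P₂ x y = 1)
    (h₂symm : ∀ x y, P₂ x y = P₂ y x)
    (ε : ℝ≥0∞) (hε : 0 < ε) (hcomp : ∀ x y, ε * P₂ x y ≤ P₁ x y)
    (z : ℝ≥0∞) (hz : z < 1) (x₀ : X) :
    ε * Uv P₁ z x₀ x₀ ≤ Uv P₂ z x₀ x₀ := by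
  have hz1 : z ≤ 1 := hz.le
  have hzne : z ≠ ∞ := ne_top_of_le_ne_top ENNReal.one_ne_top hz1
  have h1z : (1 : ℝ≥0∞) - z ≠ 0 := fun h => absurd (tsub_eq_zero_iff_le.mp h) (not_le.mpr hz)
  have hMne : ((1 : ℝ≥0∞) - z)⁻¹ ≠ ∞ := ENNReal.inv_ne_top.mpr h1z
  have hP1ne : ∀ w y, P₁ w y ≠ ∞ := fun w y =>
    ne_top_of_le_ne_top ENNReal.one_ne_top ((ENNReal.le_tsum y).trans (h₁row w).le)
  have hP2ne : ∀ w y, P₂ w y ≠ ∞ := fun w y =>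
    ne_top_of_le_ne_top ENNReal.one_ne_top ((ENNReal.le_tsum y).trans (h₂row w).le)
  have hUle : ∀ y, Uv P₁ z x₀ y ≤ (1 - z)⁻¹ := Uv_le P₁ h₁row z x₀
  have hVle : ∀ y, Uv P₂ z x₀ y ≤ (1 - z)⁻¹ := Uv_le P₂ h₂row z x₀
  have hUne : ∀ y, Uv P₁ z x₀ y ≠ ∞ := fun y => ne_top_of_le_ne_top hMne (hUle y)
  have hVne : ∀ y, Uv P₂ z x₀ y ≠ ∞ := fun y => ne_top_of_le_ne_top hMne (hVle y)
  have hUsum : ∑' y, Uv P₁ z x₀ y = (1 - z)⁻¹ := Uv_sum P₁ h₁row z x₀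
  have hVsum : ∑' y, Uv P₂ z x₀ y = (1 - z)⁻¹ := Uv_sum P₂ h₂row z x₀
  have hε1 : ε ≤ 1 := by
    calc ε = ∑' y, ε * P₂ x₀ y := by rw [ENNReal.tsum_mul_left, h₂row x₀, mul_one]
      _ ≤ ∑' y, P₁ x₀ y := ENNReal.tsum_le_tsum fun y => hcomp x₀ y
      _ = 1 := h₁row x₀
  have hεne : ε ≠ ∞ := ne_top_of_le_ne_top ENNReal.one_ne_top hε1
  have hane : Uv P₁ z x₀ x₀ ≠ ∞ := hUne x₀
  have hbne : Uv P₂ z x₀ x₀ ≠ ∞ := hVne x₀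
  -- finiteness of the various pairings
  have pairfin : ∀ f g : X → ℝ≥0∞, (∑' y, f y = (1 - z)⁻¹) → (∀ y, g y ≤ (1 - z)⁻¹) →
      (∑' y, f y * g y) ≠ ∞ := by
    intro f g hf hg
    have hle : ∑' y, f y * g y ≤ (1 - z)⁻¹ * (1 - z)⁻¹ := by
      calc ∑' y, f y * g y ≤ ∑' y, f y * (1 - z)⁻¹ :=
            ENNReal.tsum_le_tsum fun y => mul_le_mul_right (hg y) _
        _ = (1 - z)⁻¹ * (1 - z)⁻¹ := by rw [ENNReal.tsum_mul_right, hf]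
    exact ne_top_of_le_ne_top (ENNReal.mul_ne_top hMne hMne) hle
  have hA1ne : (∑' y, Uv P₁ z x₀ y * Uv P₁ z x₀ y) ≠ ∞ := pairfin _ _ hUsum hUle
  have hA2ne : (∑' y, Uv P₂ z x₀ y * Uv P₂ z x₀ y) ≠ ∞ := pairfin _ _ hVsum hVle
  have hTne : (∑' y, Uv P₂ z x₀ y * Uv P₁ z x₀ y) ≠ ∞ := pairfin _ _ hVsum hUle
  have QQfin : ∀ k : X → X → ℝ≥0∞, (∀ x, ∑' y, k x y = 1) → ∀ f g : X → ℝ≥0∞,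
      (∑' y, f y = (1 - z)⁻¹) → (∀ y, g y ≤ (1 - z)⁻¹) → QQ k f g ≠ ∞ := by
    intro k hrow f g hf hg
    have hle := QQ_le k hrow f g _ hg
    rw [hf] at hle
    exact ne_top_of_le_ne_top (ENNReal.mul_ne_top hMne hMne) hle
  have hPuune : QQ P₁ (Uv P₁ z x₀) (Uv P₁ z x₀) ≠ ∞ := QQfin P₁ h₁row _ _ hUsum hUle
  have hSuune : QQ P₂ (Uv P₁ z x₀) (Uv P₁ z x₀) ≠ ∞ := QQfin P₂ h₂row _ _ hUsum hUle
  have hSvvne : QQ P₂ (Uv P₂ z x₀) (Uv P₂ z x₀) ≠ ∞ := QQfin P₂ h₂row _ _ hVsum hVle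
  have hSuvne : QQ P₂ (Uv P₂ z x₀) (Uv P₁ z x₀) ≠ ∞ := QQfin P₂ h₂row _ _ hVsum hUle
  -- ENNReal identities
  have e1 : ∑' y, Uv P₁ z x₀ y * Uv P₁ z x₀ y
      = Uv P₁ z x₀ x₀ + z * QQ P₁ (Uv P₁ z x₀) (Uv P₁ z x₀) := pair_eq P₁ z x₀ _
  have e2 : ∑' y, Uv P₂ z x₀ y * Uv P₂ z x₀ y
      = Uv P₂ z x₀ x₀ + z * QQ P₂ (Uv P₂ z x₀) (Uv P₂ z x₀) := pair_eq P₂ z x₀ _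
  have e3 : ∑' y, Uv P₂ z x₀ y * Uv P₁ z x₀ y
      = Uv P₁ z x₀ x₀ + z * QQ P₂ (Uv P₂ z x₀) (Uv P₁ z x₀) := pair_eq P₂ z x₀ _
  -- real-side hypotheses
  have hs0' : ∀ w y, (0:ℝ) ≤ (P₂ w y).toReal := fun w y => ENNReal.toReal_nonneg
  have hssym' : ∀ w y, (P₂ w y).toReal = (P₂ y w).toReal := fun w y => by rw [h₂symm w y]
  have hu0' : ∀ y, (0:ℝ) ≤ (Uv P₁ z x₀ y).toReal := fun y => ENNReal.toReal_nonneg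
  have sprow' : ∀ w, Summable (fun y => (P₁ w y).toReal) := fun w =>
    ENNReal.summable_toReal (by rw [h₁row w]; exact ENNReal.one_ne_top)
  have hprow' : ∀ w, ∑' y, (P₁ w y).toReal = 1 := fun w => by
    rw [← ENNReal.tsum_toReal_eq (fun y => hP1ne w y), h₁row w, ENNReal.toReal_one]
  have spcol' : ∀ y, Summable (fun w => (P₁ w y).toReal) := fun y =>
    ENNReal.summable_toReal (by rw [h₁col y]; exact ENNReal.one_ne_top)
  have hpcol' : ∀ y, ∑' w, (P₁ w y).toReal = 1 := fun y => by
    rw [← ENNReal.tsum_toReal_eq (fun w => hP1ne w y), h₁col y, ENNReal.toReal_one]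
  have ssrow' : ∀ w, Summable (fun y => (P₂ w y).toReal) := fun w =>
    ENNReal.summable_toReal (by rw [h₂row w]; exact ENNReal.one_ne_top)
  have hsrow' : ∀ w, ∑' y, (P₂ w y).toReal = 1 := fun w => by
    rw [← ENNReal.tsum_toReal_eq (fun y => hP2ne w y), h₂row w, ENNReal.toReal_one]
  have sscol' : ∀ y, Summable (fun w => (P₂ w y).toReal) := fun y =>
    ENNReal.summable_toReal (by rw [h₂col y]; exact ENNReal.one_ne_top)
  have hscol' : ∀ y, ∑' w, (P₂ w y).toReal = 1 := fun y => by
    rw [← ENNReal.tsum_toReal_eq (fun w => hP2ne w y), h₂col y, ENNReal.toReal_one]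
  have hcompr' : ∀ w y, ε.toReal * (P₂ w y).toReal ≤ (P₁ w y).toReal := fun w y => by
    have h := ENNReal.toReal_mono (hP1ne w y) (hcomp w y)
    rwa [ENNReal.toReal_mul] at h
  have hzr0' : (0:ℝ) ≤ z.toReal := ENNReal.toReal_nonneg
  have hzr1' : z.toReal ≤ 1 := by
    calc z.toReal ≤ (1 : ℝ≥0∞).toReal := ENNReal.toReal_mono ENNReal.one_ne_top hz1
      _ = 1 := ENNReal.toReal_one
  have hεr0' : (0:ℝ) < ε.toReal := ENNReal.toReal_pos hε.ne' hεne
  have hεr1' : ε.toReal ≤ 1 := by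
    calc ε.toReal ≤ (1 : ℝ≥0∞).toReal := ENNReal.toReal_mono ENNReal.one_ne_top hε1
      _ = 1 := ENNReal.toReal_one
  have hone_le : ∀ p' : X → X → ℝ≥0∞, (1 : ℝ≥0∞) ≤ Uv p' z x₀ x₀ := by
    intro p'
    calc (1 : ℝ≥0∞) = z ^ 0 * kpow p' 0 x₀ x₀ := by simp [kpow]
      _ ≤ Uv p' z x₀ x₀ := ENNReal.le_tsum 0
  have ha1' : (1:ℝ) ≤ (Uv P₁ z x₀ x₀).toReal := by
    calc (1:ℝ) = (1 : ℝ≥0∞).toReal := ENNReal.toReal_one.symm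
      _ ≤ (Uv P₁ z x₀ x₀).toReal := ENNReal.toReal_mono hane (hone_le P₁)
  have hb1' : (1:ℝ) ≤ (Uv P₂ z x₀ x₀).toReal := by
    calc (1:ℝ) = (1 : ℝ≥0∞).toReal := ENNReal.toReal_one.symm
      _ ≤ (Uv P₂ z x₀ x₀).toReal := ENNReal.toReal_mono hbne (hone_le P₂)
  have hA1' : (∑' y, Uv P₁ z x₀ y * Uv P₁ z x₀ y).toReal
      = ∑' y, (Uv P₁ z x₀ y).toReal * (Uv P₁ z x₀ y).toReal := by
    rw [ENNReal.tsum_toReal_eq (fun y => ENNReal.mul_ne_top (hUne y) (hUne y))]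
    exact tsum_congr fun y => ENNReal.toReal_mul
  have sA1' : Summable (fun y => (Uv P₁ z x₀ y).toReal * (Uv P₁ z x₀ y).toReal) :=
    (ENNReal.summable_toReal hA1ne).congr fun y => ENNReal.toReal_mul
  have hA2' : (∑' y, Uv P₂ z x₀ y * Uv P₂ z x₀ y).toReal
      = ∑' y, (Uv P₂ z x₀ y).toReal * (Uv P₂ z x₀ y).toReal := by
    rw [ENNReal.tsum_toReal_eq (fun y => ENNReal.mul_ne_top (hVne y) (hVne y))]
    exact tsum_congr fun y => ENNReal.toReal_mul
  have sA2' : Summable (fun y => (Uv P₂ z x₀ y).toReal * (Uv P₂ z x₀ y).toReal) :=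
    (ENNReal.summable_toReal hA2ne).congr fun y => ENNReal.toReal_mul
  have hT' : (∑' y, Uv P₂ z x₀ y * Uv P₁ z x₀ y).toReal
      = ∑' y, (Uv P₁ z x₀ y).toReal * (Uv P₂ z x₀ y).toReal := by
    rw [ENNReal.tsum_toReal_eq (fun y => ENNReal.mul_ne_top (hVne y) (hUne y))]
    exact tsum_congr fun y => by rw [ENNReal.toReal_mul, mul_comm]
  have sT' : Summable (fun y => (Uv P₁ z x₀ y).toReal * (Uv P₂ z x₀ y).toReal) :=
    (ENNReal.summable_toReal hTne).congr fun y => by rw [ENNReal.toReal_mul, mul_comm]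
  -- double sums
  have QQrepr : ∀ (k : X → X → ℝ≥0∞) (f g : X → ℝ≥0∞), (∀ w y, k w y ≠ ∞) →
      (∀ y, f y ≠ ∞) → (∀ y, g y ≠ ∞) →
      (QQ k f g).toReal = ∑' q : X × X, (f q.1).toReal * (k q.1 q.2).toReal * (g q.2).toReal := by
    intro k f g hk hf hg
    rw [show QQ k f g = ∑' q : X × X, f q.1 * k q.1 q.2 * g q.2 from rfl,
      ENNReal.tsum_toReal_eq
        (fun q => ENNReal.mul_ne_top (ENNReal.mul_ne_top (hf _) (hk _ _)) (hg _))]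
    exact tsum_congr fun q => by rw [ENNReal.toReal_mul, ENNReal.toReal_mul]
  have QQsumm : ∀ (k : X → X → ℝ≥0∞) (f g : X → ℝ≥0∞), QQ k f g ≠ ∞ →
      Summable (fun q : X × X => (f q.1).toReal * (k q.1 q.2).toReal * (g q.2).toReal) := by
    intro k f g hfin
    exact (ENNReal.summable_toReal hfin).congr fun q => by
      rw [ENNReal.toReal_mul, ENNReal.toReal_mul]
  have hPuu' := QQrepr P₁ (Uv P₁ z x₀) (Uv P₁ z x₀) hP1ne hUne hUne
  have sPuu' := QQsumm P₁ (Uv P₁ z x₀) (Uv P₁ z x₀) hPuune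
  have hSuu' := QQrepr P₂ (Uv P₁ z x₀) (Uv P₁ z x₀) hP2ne hUne hUne
  have sSuu' := QQsumm P₂ (Uv P₁ z x₀) (Uv P₁ z x₀) hSuune
  have hSvv' := QQrepr P₂ (Uv P₂ z x₀) (Uv P₂ z x₀) hP2ne hVne hVne
  have sSvv' := QQsumm P₂ (Uv P₂ z x₀) (Uv P₂ z x₀) hSvvne
  have hSuv' := QQrepr P₂ (Uv P₂ z x₀) (Uv P₁ z x₀) hP2ne hVne hUne
  have sSuv' := QQsumm P₂ (Uv P₂ z x₀) (Uv P₁ z x₀) hSuvne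
  -- real relations
  have r1' : (∑' y, Uv P₁ z x₀ y * Uv P₁ z x₀ y).toReal
      = (Uv P₁ z x₀ x₀).toReal + z.toReal * (QQ P₁ (Uv P₁ z x₀) (Uv P₁ z x₀)).toReal := by
    rw [e1, ENNReal.toReal_add hane (ENNReal.mul_ne_top hzne hPuune), ENNReal.toReal_mul]
  have r2' : (∑' y, Uv P₂ z x₀ y * Uv P₂ z x₀ y).toReal
      = (Uv P₂ z x₀ x₀).toReal + z.toReal * (QQ P₂ (Uv P₂ z x₀) (Uv P₂ z x₀)).toReal := by
    rw [e2, ENNReal.toReal_add hbne (ENNReal.mul_ne_top hzne hSvvne), ENNReal.toReal_mul]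
  have r3' : (∑' y, Uv P₂ z x₀ y * Uv P₁ z x₀ y).toReal
      = (Uv P₁ z x₀ x₀).toReal + z.toReal * (QQ P₂ (Uv P₂ z x₀) (Uv P₁ z x₀)).toReal := by
    rw [e3, ENNReal.toReal_add hane (ENNReal.mul_ne_top hzne hSuvne), ENNReal.toReal_mul]
  -- apply the real core inequality
  have hfinal : ε.toReal * (Uv P₁ z x₀ x₀).toReal ≤ (Uv P₂ z x₀ x₀).toReal :=
    real_core (fun w y => (P₁ w y).toReal) (fun w y => (P₂ w y).toReal)
      (fun y => (Uv P₁ z x₀ y).toReal) (fun y => (Uv P₂ z x₀ y).toReal)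
      z.toReal ε.toReal (Uv P₁ z x₀ x₀).toReal (Uv P₂ z x₀ x₀).toReal
      (∑' y, Uv P₁ z x₀ y * Uv P₁ z x₀ y).toReal
      (∑' y, Uv P₂ z x₀ y * Uv P₂ z x₀ y).toReal
      (∑' y, Uv P₂ z x₀ y * Uv P₁ z x₀ y).toReal
      (QQ P₁ (Uv P₁ z x₀) (Uv P₁ z x₀)).toReal
      (QQ P₂ (Uv P₁ z x₀) (Uv P₁ z x₀)).toReal
      (QQ P₂ (Uv P₂ z x₀) (Uv P₂ z x₀)).toReal
      (QQ P₂ (Uv P₂ z x₀) (Uv P₁ z x₀)).toReal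
      hs0' hssym' hu0' sprow' hprow' spcol' hpcol' ssrow' hsrow' sscol' hscol' hcompr'
      hzr0' hzr1' hεr0' hεr1' ha1' hb1' hA1' sA1' hA2' sA2' hT' sT'
      hPuu' sPuu' hSuu' sSuu' hSvv' sSvv' hSuv' sSuv' r1' r2' r3'
  have hmulne : ε * Uv P₁ z x₀ x₀ ≠ ∞ := ENNReal.mul_ne_top hεne hane
  exact (ENNReal.toReal_le_toReal hmulne hbne).mp (by rw [ENNReal.toReal_mul]; exact hfinal)

lemma sup_pow_eq_one (N : ℕ) : (⨆ z : {w : ℝ≥0∞ // w < 1}, (z : ℝ≥0∞) ^ N) = 1 := by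
  apply le_antisymm
  · exact iSup_le fun z => pow_le_one' z.2.le N
  · refine le_of_forall_lt fun c hc => ?_
    obtain ⟨c', hcc', hc'1⟩ := exists_between hc
    rcases Nat.eq_zero_or_pos N with hN | hN
    · subst hN
      exact lt_of_lt_of_le hc (le_iSup_of_le ⟨0, zero_lt_one⟩ (by simp))
    · have hz1 : c' ^ ((N : ℝ)⁻¹) < 1 :=
        ENNReal.rpow_lt_one hc'1 (by positivity)
      refine lt_of_lt_of_le hcc' (le_iSup_of_le ⟨c' ^ ((N : ℝ)⁻¹), hz1⟩ ?_)
      have h : ((c' ^ ((N : ℝ)⁻¹) : ℝ≥0∞)) ^ N = c' := by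
        rw [← ENNReal.rpow_natCast (c' ^ ((N : ℝ)⁻¹)) N, ← ENNReal.rpow_mul,
          inv_mul_cancel₀ (by exact_mod_cast hN.ne'), ENNReal.rpow_one]
      simp only [h]
      exact le_rfl

end BLP

/-- Comparison lemma of Baldi–Lohoué–Peyrière: if `P₁, P₂` are doubly stochastic kernels on a
countable set, `P₂` is symmetric, `P₁ ≥ ε P₂` with `ε > 0`, and `P₂` is transient, then `P₁`
is transient. -/
theorem comparison_lemma {X : Type*} [Countable X] [DecidableEq X]
    (P₁ P₂ : X → X → ℝ≥0∞)
    (h₁row : ∀ x, ∑' y, P₁ x y = 1) (h₁col : ∀ y, ∑' x, P₁ x y = 1)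
    (h₂row : ∀ x, ∑' y, P₂ x y = 1) (h₂col : ∀ y, ∑' x, P₂ x y = 1)
    (h₂symm : ∀ x y, P₂ x y = P₂ y x)
    (ε : ℝ≥0∞) (hε : 0 < ε) (hcomp : ∀ x y, ε * P₂ x y ≤ P₁ x y)
    (h₂trans : ∀ x, green P₂ x x ≠ ∞) :
    ∀ x, green P₁ x x ≠ ∞ := by
  intro x₀
  -- for every z < 1, ε * ∑' n, z^n * kpow P₁ n x₀ x₀ ≤ green P₂ x₀ x₀
  have hkey : ∀ z : ℝ≥0∞, z < 1 → ε * BLP.Uv P₁ z x₀ x₀ ≤ green P₂ x₀ x₀ := by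
    intro z hz
    refine le_trans (BLP.key P₁ P₂ h₁row h₁col h₂row h₂col h₂symm ε hε hcomp z hz x₀) ?_
    unfold BLP.Uv green
    refine ENNReal.tsum_le_tsum fun n => ?_
    calc z ^ n * kpow P₂ n x₀ x₀ ≤ 1 * kpow P₂ n x₀ x₀ :=
          mul_le_mul_left (pow_le_one' hz.le n) _
      _ = kpow P₂ n x₀ x₀ := one_mul _
  -- finite-sum consequence
  have hfin : ∀ s : Finset ℕ, ε * ∑ n ∈ s, kpow P₁ n x₀ x₀ ≤ green P₂ x₀ x₀ := by
    intro s
    set C := green P₂ x₀ x₀ with hC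
    set N := s.sup id with hN
    have hzz : ∀ z : {w : ℝ≥0∞ // w < 1}, (ε * ∑ n ∈ s, kpow P₁ n x₀ x₀) * (z : ℝ≥0∞) ^ N ≤ C := by
      rintro ⟨z, hz⟩
      have h1 : (∑ n ∈ s, kpow P₁ n x₀ x₀) * z ^ N ≤ ∑ n ∈ s, z ^ n * kpow P₁ n x₀ x₀ := by
        rw [Finset.sum_mul]
        refine Finset.sum_le_sum fun n hn => ?_
        have hpow : z ^ N ≤ z ^ n :=
          pow_le_pow_of_le_one (by simp) hz.le (Finset.le_sup (f := id) hn)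
        calc kpow P₁ n x₀ x₀ * z ^ N ≤ kpow P₁ n x₀ x₀ * z ^ n := mul_le_mul_right hpow _
          _ = z ^ n * kpow P₁ n x₀ x₀ := mul_comm _ _
      have h2 : ∑ n ∈ s, z ^ n * kpow P₁ n x₀ x₀ ≤ BLP.Uv P₁ z x₀ x₀ := ENNReal.sum_le_tsum s
      calc (ε * ∑ n ∈ s, kpow P₁ n x₀ x₀) * z ^ N
          = ε * ((∑ n ∈ s, kpow P₁ n x₀ x₀) * z ^ N) := by ring
        _ ≤ ε * BLP.Uv P₁ z x₀ x₀ := mul_le_mul_right (h1.trans h2) _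
        _ ≤ C := hkey z hz
    calc ε * ∑ n ∈ s, kpow P₁ n x₀ x₀
        = (ε * ∑ n ∈ s, kpow P₁ n x₀ x₀) * ⨆ z : {w : ℝ≥0∞ // w < 1}, (z : ℝ≥0∞) ^ N := by
          rw [BLP.sup_pow_eq_one, mul_one]
      _ = ⨆ z : {w : ℝ≥0∞ // w < 1}, (ε * ∑ n ∈ s, kpow P₁ n x₀ x₀) * (z : ℝ≥0∞) ^ N :=
          ENNReal.mul_iSup _ _
      _ ≤ C := iSup_le hzz
  have : ε * green P₁ x₀ x₀ ≤ green P₂ x₀ x₀ := by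
    unfold green
    rw [ENNReal.tsum_eq_iSup_sum, ENNReal.mul_iSup]
    exact iSup_le hfin
  intro hinf
  rw [hinf, ENNReal.mul_top hε.ne'] at this
  exact h₂trans x₀ (top_le_iff.mp this)
end

section
/- For a nearest-neighbour random walk on ℕ₀ as above with Σ_k r(e_k) < ∞, the Green function satisfies G(n,n) = (1/(r(e_n)·P(n,n−1))) · Σ_{k=n+1}^∞ r(e_k) for every n ≥ 1. -/
open scoped ENNReal

lemma kpow_succ_left {X : Type*} [DecidableEq X] (p : X → X → ℝ≥0∞) :
    ∀ (m : ℕ) (x y : X), kpow p (m+1) x y = ∑' z, p x z * kpow p m z y := by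
  intro m
  induction m with
  | zero =>
    intro x y
    have h1 : kpow p 1 x y = ∑' z, kpow p 0 x z * p z y := rfl
    rw [h1]
    have h2 : ∀ z : X, kpow p 0 x z * p z y = if z = x then p x y else 0 := by
      intro z
      simp only [kpow]
      rcases eq_or_ne z x with h | h
      · subst h; simp
      · rw [if_neg (Ne.symm h), if_neg h, zero_mul]
    have h3 : ∀ z : X, p x z * kpow p 0 z y = if z = y then p x y else 0 := by
      intro z
      simp only [kpow]
      rcases eq_or_ne z y with h | h
      · subst h; simp
      · rw [if_neg h, if_neg h, mul_zero]
    rw [tsum_congr h2, tsum_ite_eq x (fun _ => p x y), tsum_congr h3, tsum_ite_eq y (fun _ => p x y)]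
  | succ m ih =>
    intro x y
    have h1 : kpow p (m+2) x y = ∑' z, kpow p (m+1) x z * p z y := rfl
    rw [h1]
    calc ∑' z, kpow p (m+1) x z * p z y
        = ∑' z, (∑' w, p x w * kpow p m w z) * p z y := by
          exact tsum_congr fun z => by rw [ih]
      _ = ∑' z, ∑' w, p x w * kpow p m w z * p z y := by
          exact tsum_congr fun z => (ENNReal.tsum_mul_right).symm
      _ = ∑' w, ∑' z, p x w * (kpow p m w z * p z y) := by
          rw [ENNReal.tsum_comm]
          exact tsum_congr fun w => tsum_congr fun z => by ring
      _ = ∑' w, p x w * ∑' z, kpow p m w z * p z y := by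
          exact tsum_congr fun w => ENNReal.tsum_mul_left
      _ = ∑' w, p x w * kpow p (m+1) w y := rfl

lemma green_succ {X : Type*} [DecidableEq X] (p : X → X → ℝ≥0∞) (x y : X) :
    green p x y = (if x = y then 1 else 0) + ∑' z, p x z * green p z y := by
  unfold green
  rw [tsum_eq_zero_add' ENNReal.summable]
  congr 1
  calc ∑' m, kpow p (m+1) x y = ∑' m, ∑' z, p x z * kpow p m z y := by
        exact tsum_congr fun m => kpow_succ_left p m x y
    _ = ∑' z, ∑' m, p x z * kpow p m z y := ENNReal.tsum_comm
    _ = ∑' z, p x z * ∑' m, kpow p m z y := tsum_congr fun z => ENNReal.tsum_mul_left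

lemma green_le_of_supersol {X : Type*} [DecidableEq X] (p : X → X → ℝ≥0∞) (y : X)
    (h : X → ℝ≥0∞)
    (hh : ∀ x, (if x = y then 1 else 0) + ∑' z, p x z * h z ≤ h x) :
    ∀ x, green p x y ≤ h x := by
  have part : ∀ M x, ∑ m ∈ Finset.range M, kpow p m x y ≤ h x := by
    intro M
    induction M with
    | zero => intro x; simp
    | succ M ih =>
      intro x
      rw [Finset.sum_range_succ']
      have h0 : kpow p 0 x y = if x = y then 1 else 0 := rfl
      calc (∑ i ∈ Finset.range M, kpow p (i+1) x y) + kpow p 0 x y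
          = (∑ i ∈ Finset.range M, ∑' z, p x z * kpow p i z y) + kpow p 0 x y := by
            congr 1
            exact Finset.sum_congr rfl fun i _ => kpow_succ_left p i x y
        _ = (∑' z, ∑ i ∈ Finset.range M, p x z * kpow p i z y) + kpow p 0 x y := by
            rw [Summable.tsum_finsetSum (fun i _ => ENNReal.summable)]
        _ = (∑' z, p x z * ∑ i ∈ Finset.range M, kpow p i z y) + kpow p 0 x y := by
            congr 1
            exact tsum_congr fun z => (Finset.mul_sum _ _ _).symm
        _ ≤ (∑' z, p x z * h z) + (if x = y then 1 else 0) := by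
            rw [h0]
            exact add_le_add (ENNReal.tsum_le_tsum fun z => mul_le_mul_right (ih z) _) le_rfl
        _ = (if x = y then 1 else 0) + ∑' z, p x z * h z := add_comm _ _
        _ ≤ h x := hh x
  intro x
  exact Summable.tsum_le_of_sum_range_le ENNReal.summable fun M => part M x

/-- For a transient nearest-neighbour random walk on ℕ₀, the Green function satisfies
`G(n,n) = (1/(r(e_n)·P(n,n-1))) · ∑_{k=n+1}^∞ r(e_k)` for every `n ≥ 1`. -/
theorem nearest_neighbour_green_formula
    (a b : ℕ → ℝ≥0∞)
    (ha0 : ∀ k, 0 < a k) (ha1 : ∀ k, a k < 1)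
    (hb0 : ∀ k, 1 ≤ k → 0 < b k) (hb1 : ∀ k, b k < 1)
    (hb00 : b 0 = 0) (hab : ∀ k, a k + b k ≤ 1)
    (P : ℕ → ℕ → ℝ≥0∞)
    (hP : ∀ k j, P k j =
      if j = k + 1 then a k
      else if j + 1 = k then b k
      else if j = k then 1 - a k - b k
      else 0)
    (r : ℕ → ℝ≥0∞)
    (hr : ∀ k, r k = (∏ i ∈ Finset.Ico 1 k, b i) / ∏ i ∈ Finset.range k, a i)
    (hsum : ∑' k, r (k + 1) ≠ ∞) :
    ∀ n : ℕ, 1 ≤ n →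
      green P n n = (1 / (r n * P n (n - 1))) * ∑' k : ℕ, if n + 1 ≤ k then r k else 0 := by
  intro n hn
  have haT : ∀ k, a k ≠ ∞ := fun k => ((ha1 k).trans ENNReal.one_lt_top).ne
  have hbT : ∀ k, b k ≠ ∞ := fun k => ((hb1 k).trans ENNReal.one_lt_top).ne
  have ha0' : ∀ k, a k ≠ 0 := fun k => (ha0 k).ne'
  have hr0 : ∀ k, r k ≠ 0 := by
    intro k
    rw [hr k]
    intro h
    rcases ENNReal.div_eq_zero_iff.1 h with h | h
    · exact (Finset.prod_ne_zero_iff.2 fun i hi => (hb0 i (Finset.mem_Ico.1 hi).1).ne') h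
    · exact ENNReal.prod_ne_top (fun i _ => haT i) h
  have hrT : ∀ k, r k ≠ ∞ := by
    intro k
    rw [hr k]
    intro h
    rcases ENNReal.div_eq_top.1 h with ⟨_, h⟩ | ⟨h, _⟩
    · exact (Finset.prod_ne_zero_iff.2 fun i _ => ha0' i) h
    · exact ENNReal.prod_ne_top (fun i hi => hbT i) h
  have key : ∀ k, 1 ≤ k → a k * r (k+1) = b k * r k := by
    intro k hk
    rw [hr (k+1), hr k, Finset.prod_Ico_succ_top hk, Finset.prod_range_succ]
    set B := ∏ i ∈ Finset.Ico 1 k, b i with hB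
    set A := ∏ i ∈ Finset.range k, a i with hA
    have hA0 : A ≠ 0 := Finset.prod_ne_zero_iff.2 fun i _ => ha0' i
    have hAT : A ≠ ∞ := ENNReal.prod_ne_top (fun i _ => haT i)
    rw [div_eq_mul_inv, div_eq_mul_inv,
      ENNReal.mul_inv (Or.inl hA0) (Or.inl hAT)]
    calc a k * (B * b k * (A⁻¹ * (a k)⁻¹))
        = (a k * (a k)⁻¹) * (b k * (B * A⁻¹)) := by ring
      _ = b k * (B * A⁻¹) := by rw [ENNReal.mul_inv_cancel (ha0' k) (haT k), one_mul]
  have hbn0 : b n ≠ 0 := (hb0 n hn).ne'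
  have hD0 : r n * b n ≠ 0 := mul_ne_zero (hr0 n) hbn0
  have hDT : r n * b n ≠ ∞ := ENNReal.mul_ne_top (hrT n) (hbT n)
  set E : ℝ≥0∞ := (r n * b n)⁻¹ with hEdef
  have hET : E ≠ ∞ := ENNReal.inv_ne_top.2 hD0
  have hDE : (r n * b n) * E = 1 := ENNReal.mul_inv_cancel hD0 hDT
  set S : ℕ → ℝ≥0∞ := fun m => ∑' k, r (k + m + 1) with hSdef
  have hS0 : S 0 ≠ ∞ := by simp only [hSdef]; simpa using hsum
  have hSle : ∀ m, S m ≤ S 0 := by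
    intro m
    have h := Summable.sum_add_tsum_nat_add' (f := fun k => r (k+1)) (k := m) ENNReal.summable
    calc S m ≤ (∑ i ∈ Finset.range m, r (i+1)) + S m := self_le_add_left _ _
      _ = ∑' i, r (i+1) := by simp only [hSdef]; exact h
      _ = S 0 := by simp only [hSdef]
  have hSfin : ∀ m, S m ≠ ∞ := fun m => ne_top_of_le_ne_top hS0 (hSle m)
  have hSrec : ∀ m, S m = r (m+1) + S (m+1) := by
    intro m
    have h := tsum_eq_zero_add' (f := fun k => r (k + m + 1)) ENNReal.summable
    simp only [hSdef]
    rw [h]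
    have e2 : (∑' k, r (k + 1 + m + 1)) = ∑' k, r (k + (m+1) + 1) :=
      tsum_congr fun k => congrArg r (by omega)
    rw [e2]
    norm_num
  set g : ℕ → ℝ≥0∞ := fun x => S (max x n) * E with hgdef
  have hgfin : ∀ x, g x ≠ ∞ := fun x => ENNReal.mul_ne_top (hSfin _) hET
  have comb : ∀ (x : ℕ) (t : ℝ≥0∞), b x * t + (1 - a x - b x) * t + a x * t = t := by
    intro x t
    rw [← add_mul, ← add_mul]
    have hba : b x ≤ 1 - a x := ENNReal.le_sub_of_add_le_left (haT x) (hab x)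
    rw [add_tsub_cancel_of_le hba, tsub_add_cancel_of_le (ha1 x).le, one_mul]
  have step : ∀ (f : ℕ → ℝ≥0∞) (x : ℕ),
      (∑' z, P x z * f z) = b x * f (x-1) + (1 - a x - b x) * f x + a x * f (x+1) := by
    intro f x
    cases x with
    | zero =>
      rw [tsum_eq_sum (s := {0, 1})
        (fun z hz => by
          simp only [Finset.mem_insert, Finset.mem_singleton] at hz
          push_neg at hz
          rw [hP, if_neg (by omega), if_neg (by omega), if_neg (by omega), zero_mul])]
      rw [Finset.sum_pair (by norm_num : (0:ℕ) ≠ 1)]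
      have h00 : P 0 0 = 1 - a 0 - b 0 := by
        rw [hP, if_neg (by omega), if_neg (by omega), if_pos rfl]
      have h01 : P 0 1 = a 0 := by rw [hP, if_pos rfl]
      rw [h00, h01, hb00, zero_mul, zero_add]
    | succ k =>
      rw [tsum_eq_sum (s := {k, k+1, k+2})
        (fun z hz => by
          simp only [Finset.mem_insert, Finset.mem_singleton] at hz
          push_neg at hz
          obtain ⟨h1, h2, h3⟩ := hz
          rw [hP, if_neg (by omega), if_neg (by omega), if_neg (by omega), zero_mul])]
      rw [Finset.sum_insert (by simp), Finset.sum_insert (by simp), Finset.sum_singleton]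
      have e1 : P (k+1) k = b (k+1) := by rw [hP, if_neg (by omega), if_pos rfl]
      have e2 : P (k+1) (k+1) = 1 - a (k+1) - b (k+1) := by
        rw [hP, if_neg (by omega), if_neg (by omega), if_pos rfl]
      have e3 : P (k+1) (k+2) = a (k+1) := by rw [hP, if_pos rfl]
      rw [e1, e2, e3, show k + 1 - 1 = k from rfl]
      ring
  have geq : ∀ x, g x = (if x = n then 1 else 0) + ∑' z, P x z * g z := by
    intro x
    rw [step g x]
    rcases lt_trichotomy x n with hx | hx | hx
    · have m1 : max x n = n := max_eq_right hx.le
      have m2 : max (x-1) n = n := max_eq_right (by omega)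
      have m3 : max (x+1) n = n := max_eq_right (by omega)
      simp only [hgdef]
      rw [m1, m2, m3, if_neg (by omega), zero_add, comb x (S n * E)]
    · subst hx
      have m1 : max x x = x := max_self x
      have m2 : max (x-1) x = x := max_eq_right (by omega)
      have m3 : max (x+1) x = x+1 := max_eq_left (by omega)
      have h1 : (1:ℝ≥0∞) + a x * (S (x+1) * E) = a x * (S x * E) := by
        rw [hSrec x, add_mul, mul_add]
        congr 1
        rw [← mul_assoc, key x hn, mul_comm (b x) (r x)]
        exact hDE.symm
      simp only [hgdef]
      rw [m1, m2, m3, if_pos trivial]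
      calc S x * E
          = b x * (S x * E) + (1 - a x - b x) * (S x * E) + a x * (S x * E) :=
            (comb x _).symm
        _ = b x * (S x * E) + (1 - a x - b x) * (S x * E) + (1 + a x * (S (x+1) * E)) := by
            rw [h1]
        _ = 1 + (b x * (S x * E) + (1 - a x - b x) * (S x * E) + a x * (S (x+1) * E)) := by
            ring
    · have hx1 : 1 ≤ x := by omega
      have m1 : max x n = x := max_eq_left hx.le
      have m2 : max (x-1) n = x-1 := max_eq_left (by omega)
      have m3 : max (x+1) n = x+1 := max_eq_left (by omega)
      have hxs : x - 1 + 1 = x := by omega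
      have hrecx : S (x-1) = r x + S x := by
        have h := hSrec (x-1)
        rwa [hxs] at h
      have h2 : a x * (S x * E) = b x * (r x * E) + a x * (S (x+1) * E) := by
        rw [hSrec x, add_mul, mul_add]
        congr 1
        rw [← mul_assoc, key x hx1, mul_assoc]
      simp only [hgdef]
      rw [m1, m2, m3, if_neg (by omega), zero_add, hrecx]
      calc S x * E
          = b x * (S x * E) + (1 - a x - b x) * (S x * E) + a x * (S x * E) :=
            (comb x _).symm
        _ = b x * (S x * E) + (1 - a x - b x) * (S x * E)
              + (b x * (r x * E) + a x * (S (x+1) * E)) := by rw [h2]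
        _ = b x * ((r x + S x) * E) + (1 - a x - b x) * (S x * E) + a x * (S (x+1) * E) := by
            ring
  have hle : ∀ x, green P x n ≤ g x :=
    green_le_of_supersol P n g (fun x => le_of_eq (geq x).symm)
  have hgreen_fin : ∀ x, green P x n ≠ ∞ := fun x => ne_top_of_le_ne_top (hgfin x) (hle x)
  set u : ℕ → ℝ≥0∞ := fun x => g x - green P x n with hudef
  have hsplit : ∀ x, u x + green P x n = g x := fun x => tsub_add_cancel_of_le (hle x)
  have hufin : ∀ x, u x ≠ ∞ := fun x => ne_top_of_le_ne_top (hgfin x) tsub_le_self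
  have uharm : ∀ x, u x = ∑' z, P x z * u z := by
    intro x
    have hgx : g x = (∑' z, P x z * u z) + green P x n := by
      rw [geq x]
      calc (if x = n then 1 else 0) + ∑' z, P x z * g z
          = (if x = n then 1 else 0) + ∑' z, (P x z * u z + P x z * green P z n) := by
            congr 1
            exact tsum_congr fun z => by rw [← mul_add, hsplit z]
        _ = (if x = n then 1 else 0)
              + ((∑' z, P x z * u z) + ∑' z, P x z * green P z n) := by
            rw [ENNReal.tsum_add]
        _ = (∑' z, P x z * u z) + ((if x = n then 1 else 0) + ∑' z, P x z * green P z n) := by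
            ring
        _ = (∑' z, P x z * u z) + green P x n := by rw [← green_succ]
    have h := hsplit x
    rw [hgx] at h
    exact (ENNReal.add_left_inj (hgreen_fin x)).1 h
  have ustep : ∀ x, u (x+1) = u x := by
    intro x
    induction x with
    | zero =>
      have h := uharm 0
      rw [step u 0] at h
      rw [hb00] at h
      simp only [zero_mul, zero_add, tsub_zero] at h
      have h2 : (1 - a 0) * u 0 + a 0 * u 0 = u 0 := by
        have h3 := comb 0 (u 0)
        rwa [hb00, zero_mul, zero_add, tsub_zero] at h3
      have h3 : (1 - a 0) * u 0 + a 0 * u 1 = (1 - a 0) * u 0 + a 0 * u 0 := by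
        rw [h2, ← h]
      have hfin : (1 - a 0) * u 0 ≠ ∞ :=
        ENNReal.mul_ne_top ((tsub_le_self.trans_lt ENNReal.one_lt_top).ne) (hufin 0)
      have h4 := (ENNReal.add_right_inj hfin).1 h3
      exact (ENNReal.mul_right_inj (ha0' 0) (haT 0)).1 h4
    | succ x ih =>
      have h := uharm (x+1)
      rw [step u (x+1)] at h
      simp only [Nat.add_sub_cancel] at h
      rw [← ih] at h
      have hcomb := comb (x+1) (u (x+1))
      have h3 : b (x+1) * u (x+1) + (1 - a (x+1) - b (x+1)) * u (x+1) + a (x+1) * u (x+2)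
          = b (x+1) * u (x+1) + (1 - a (x+1) - b (x+1)) * u (x+1) + a (x+1) * u (x+1) := by
        rw [hcomb, ← h]
      have hfin : b (x+1) * u (x+1) + (1 - a (x+1) - b (x+1)) * u (x+1) ≠ ∞ :=
        ENNReal.add_ne_top.2 ⟨ENNReal.mul_ne_top (hbT (x+1)) (hufin (x+1)),
          ENNReal.mul_ne_top (((tsub_le_self.trans tsub_le_self).trans_lt ENNReal.one_lt_top).ne) (hufin (x+1))⟩
      have h4 := (ENNReal.add_right_inj hfin).1 h3
      exact (ENNReal.mul_right_inj (ha0' (x+1)) (haT (x+1))).1 h4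
  have uconst : ∀ x, u x = u 0 := by
    intro x
    induction x with
    | zero => rfl
    | succ x ih => rw [ustep x, ih]
  have hu0 : u 0 = 0 := by
    have h2 : Filter.Tendsto S Filter.atTop (nhds 0) := by
      have h := ENNReal.tendsto_sum_nat_add (fun k => r (k+1)) hsum
      simp only [hSdef]
      exact h
    have htd : Filter.Tendsto (fun m => S m * E) Filter.atTop (nhds 0) := by
      have h := ENNReal.Tendsto.mul_const h2 (Or.inr hET)
      rwa [zero_mul] at h
    have hev : ∀ᶠ m in Filter.atTop, u 0 ≤ S m * E := by
      refine Filter.eventually_atTop.2 ⟨n, fun m hm => ?_⟩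
      have h1 : u 0 = u m := (uconst m).symm
      have h2' : u m ≤ g m := tsub_le_self
      have h3 : g m = S m * E := by simp only [hgdef]; rw [max_eq_left hm]
      rw [h1]
      exact h3 ▸ h2'
    exact le_antisymm (ge_of_tendsto htd hev) zero_le
  have hmain : green P n n = S n * E := by
    have h := hsplit n
    rw [uconst n, hu0, zero_add] at h
    rw [h]
    simp only [hgdef]
    rw [max_self]
  have hPn : P n (n-1) = b n := by
    rw [hP, if_neg (by omega), if_pos (by omega)]
  have htail : (∑' k : ℕ, if n + 1 ≤ k then r k else 0) = S n := by
    have h := Summable.sum_add_tsum_nat_add'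
      (f := fun k => if n + 1 ≤ k then r k else 0) (k := n+1) ENNReal.summable
    rw [← h]
    rw [Finset.sum_eq_zero (fun i hi => by
      simp only [Finset.mem_range] at hi
      exact if_neg (by omega)), zero_add]
    simp only [hSdef]
    refine tsum_congr fun k => ?_
    rw [if_pos (by omega)]
    exact congrArg r (by omega)
  rw [hmain, hPn, htail, one_div, hEdef, mul_comm]
end
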